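/- Σ_{k=0}^∞ k!/(2k+1)!! = π/2. -/

import Mathlib

open Real
open scoped ENNReal NNReal

/-- (2k+1)!! = (2k+1)!/(2^k k!) -/
noncomputable def oddDF (k : ℕ) : ℝ := (2 * k + 1).factorial / (2 ^ k * k.factorial)

private lemma aux_prod (n : ℕ) : ∀ k : ℕ,
    n.factorial * ∏ j ∈ Finset.range k, (n + 1 + j) = (n + k).factorial := by
  intro k
  induction k with
  | zero => simp
  | succ k ih =>
      rw [Finset.prod_range_succ, ← mul_assoc, ih]
      rw [show n + (k + 1) = (n + k) + 1 by ring, Nat.factorial_succ]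
      ring

private lemma betaNat (k : ℕ) :
    ∫ x in (0:ℝ)..1, x ^ k * (1 - x) ^ k
      = (k.factorial * k.factorial : ℝ) / (2 * k + 1).factorial := by
  have h := Complex.betaIntegral_eval_nat_add_one_right
    (u := (k : ℂ) + 1) (by simp; positivity) k
  have h2 : Complex.betaIntegral ((k : ℂ) + 1) ((k : ℂ) + 1)
      = ((∫ x in (0:ℝ)..1, x ^ k * (1 - x) ^ k : ℝ) : ℂ) := by
    rw [Complex.betaIntegral, ← intervalIntegral.integral_ofReal]
    refine intervalIntegral.integral_congr fun x _ => ?_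
    rw [show (k : ℂ) + 1 - 1 = (k : ℕ) by push_cast; ring]
    rw [Complex.cpow_natCast, Complex.cpow_natCast]
    push_cast
    ring
  have hkne : (k.factorial : ℂ) ≠ 0 := by exact_mod_cast Nat.factorial_ne_zero k
  have hp : (∏ j ∈ Finset.range (k + 1), ((k : ℂ) + 1 + j))
      = ((2 * k + 1).factorial : ℂ) / (k.factorial : ℂ) := by
    have hn := aux_prod k (k + 1)
    rw [show k + (k + 1) = 2 * k + 1 by ring] at hn
    have hc : ((k.factorial : ℂ)) * ∏ j ∈ Finset.range (k + 1), ((k : ℂ) + 1 + (j : ℂ))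
        = ((2 * k + 1).factorial : ℂ) := by exact_mod_cast hn
    rw [eq_div_iff hkne, mul_comm]
    exact hc
  rw [h2, hp, div_div_eq_mul_div,
    show ((k.factorial : ℂ) * k.factorial / ((2 * k + 1).factorial : ℂ))
      = ((k.factorial * k.factorial / (2 * k + 1).factorial : ℝ) : ℂ) by push_cast; ring] at h
  exact_mod_cast h

private lemma term_eq (k : ℕ) :
    (k.factorial : ℝ) / oddDF k = ∫ x in (0:ℝ)..1, (2 * x * (1 - x)) ^ k := by
  have he : ∀ x : ℝ, (2 * x * (1 - x)) ^ k = (2:ℝ)^k * (x ^ k * (1 - x)^k) :=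
    fun x => by rw [mul_pow, mul_pow]; ring
  simp_rw [he]
  rw [intervalIntegral.integral_const_mul, betaNat, oddDF]
  have h1 : (k.factorial : ℝ) ≠ 0 := by exact_mod_cast Nat.factorial_ne_zero k
  have h2 : ((2*k+1).factorial : ℝ) ≠ 0 := by exact_mod_cast Nat.factorial_ne_zero (2*k+1)
  field_simp

private lemma arctan_integral :
    ∫ x in (0:ℝ)..1, (1 - 2 * x * (1 - x))⁻¹ = Real.pi / 2 := by
  have hd : ∀ x ∈ Set.uIcc (0:ℝ) 1,
      HasDerivAt (fun y : ℝ => Real.arctan (2 * y - 1)) ((1 - 2 * x * (1 - x))⁻¹) x := by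
    intro x _
    have h := (Real.hasDerivAt_arctan (2 * x - 1)).comp x
      (((hasDerivAt_id x).const_mul 2).sub_const 1)
    refine HasDerivAt.congr_deriv (f := fun y : ℝ => Real.arctan (2 * y - 1)) h ?_
    have hpos : (0:ℝ) < 1 + (2*x-1)^2 := by positivity
    have hpos2 : (0:ℝ) < 1 - 2 * x * (1 - x) := by nlinarith [sq_nonneg (2*x-1)]
    field_simp
    ring
  have hc : ContinuousOn (fun x : ℝ => (1 - 2 * x * (1 - x))⁻¹) (Set.uIcc 0 1) := by
    apply ContinuousOn.inv₀
    · fun_prop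
    · intro x _
      nlinarith [sq_nonneg (2*x-1)]
  rw [intervalIntegral.integral_eq_sub_of_hasDerivAt hd
    hc.intervalIntegrable]
  norm_num [Real.arctan_one, Real.arctan_neg]
  ring

theorem tsum_factorial_div_oddDF :
    ∑' k : ℕ, (k.factorial : ℝ) / oddDF k = Real.pi / 2 := by
  have hmeas : ∀ k : ℕ, MeasureTheory.AEStronglyMeasurable
      (fun x : ℝ => (2 * x * (1 - x)) ^ k)
      (MeasureTheory.volume.restrict (Set.Ioc (0:ℝ) 1)) := by
    intro k
    exact (by fun_prop : Continuous fun x : ℝ => (2 * x * (1 - x)) ^ k).aestronglyMeasurable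
  have hb : ∀ k : ℕ, ∫⁻ x in Set.Ioc (0:ℝ) 1, ‖(2 * x * (1 - x)) ^ k‖₊
      ≤ ENNReal.ofReal ((1/2:ℝ)^k) := by
    intro k
    have hpt : ∀ x ∈ Set.Ioc (0:ℝ) 1,
        (‖(2 * x * (1 - x)) ^ k‖₊ : ℝ≥0∞) ≤ ENNReal.ofReal ((1/2:ℝ)^k) := by
      intro x hx
      rw [← enorm_eq_nnnorm, ← ofReal_norm]
      apply ENNReal.ofReal_le_ofReal
      rw [Real.norm_eq_abs, abs_pow, abs_of_nonneg (by nlinarith [hx.1.le, hx.2])]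
      exact pow_le_pow_left₀ (by nlinarith [hx.1.le, hx.2]) (by nlinarith [sq_nonneg (2*x-1)]) k
    calc ∫⁻ x in Set.Ioc (0:ℝ) 1, ‖(2 * x * (1 - x)) ^ k‖₊
        ≤ ∫⁻ x in Set.Ioc (0:ℝ) 1, ENNReal.ofReal ((1/2:ℝ)^k) :=
          MeasureTheory.setLIntegral_mono' measurableSet_Ioc hpt
      _ = ENNReal.ofReal ((1/2:ℝ)^k) * MeasureTheory.volume (Set.Ioc (0:ℝ) 1) :=
          MeasureTheory.setLIntegral_const _ _
      _ ≤ ENNReal.ofReal ((1/2:ℝ)^k) := by simp [Real.volume_Ioc]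
  have hfin : (∑' k : ℕ, ∫⁻ x in Set.Ioc (0:ℝ) 1, ‖(2 * x * (1 - x)) ^ k‖₊) ≠ ⊤ := by
    refine ne_top_of_le_ne_top ?_ (ENNReal.tsum_le_tsum hb)
    rw [← ENNReal.ofReal_tsum_of_nonneg (fun k => by positivity)
      (summable_geometric_of_lt_one (by norm_num) (by norm_num))]
    exact ENNReal.ofReal_ne_top
  calc ∑' k : ℕ, (k.factorial : ℝ) / oddDF k
      = ∑' k : ℕ, ∫ x in Set.Ioc (0:ℝ) 1, (2 * x * (1 - x)) ^ k := by
        refine tsum_congr fun k => ?_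
        rw [term_eq k, intervalIntegral.integral_of_le zero_le_one]
    _ = ∫ x in Set.Ioc (0:ℝ) 1, ∑' k : ℕ, (2 * x * (1 - x)) ^ k :=
        (MeasureTheory.integral_tsum hmeas hfin).symm
    _ = ∫ x in Set.Ioc (0:ℝ) 1, (1 - 2 * x * (1 - x))⁻¹ := by
        refine MeasureTheory.setIntegral_congr_fun measurableSet_Ioc fun x hx => ?_
        exact tsum_geometric_of_lt_one (by nlinarith [hx.1.le, hx.2])
          (by nlinarith [hx.1, hx.2, sq_nonneg (2*x-1)])
    _ = ∫ x in (0:ℝ)..1, (1 - 2 * x * (1 - x))⁻¹ :=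
        (intervalIntegral.integral_of_le zero_le_one).symm
    _ = Real.pi / 2 := arctan_integral
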